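/- Let Π and M be orthogonal projections on a finite-dimensional Hilbert space H and φ a density operator on H. Let γ = 1 - Tr(Mφ) and μ = |1/2 - Tr(MΠφΠ) - Tr(M(I-Π)φ(I-Π))|. For 1/2 < ω ≤ 1, let K be the orthogonal projection onto the direct sum of eigenspaces of ΠMΠ + (I-Π)M(I-Π) with eigenvalue in [1-ω, ω]. Then Tr((I-K)φ) ≤ (2μ + 10√γ) / (1 - 4ω(1-ω)). -/

import Mathlib

open scoped BigOperators Matrix ComplexOrder

section Aux

variable {d : Type*} [Fintype d] [DecidableEq d]

private def toE (X : Matrix d d ℂ) : EuclideanSpace ℂ (d × d) := WithLp.toLp 2 (fun p : d × d => X p.1 p.2)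

private lemma trace_inner_aux (X Y : Matrix d d ℂ) :
    (Xᴴ * Y).trace = inner (𝕜 := ℂ) (toE X) (toE Y) := by
  simp only [Matrix.trace, Matrix.diag, Matrix.mul_apply, Matrix.conjTranspose_apply,
    PiLp.inner_apply, RCLike.inner_apply, toE]
  rw [Fintype.sum_prod_type]
  rw [Finset.sum_comm]
  simp [mul_comm]

lemma frob_cs (X Y : Matrix d d ℂ) :
    ‖(Xᴴ * Y).trace‖ ≤ Real.sqrt ((Xᴴ * X).trace.re) * Real.sqrt ((Yᴴ * Y).trace.re) := by
  have h1 : (Xᴴ * Y).trace = inner (𝕜 := ℂ) (toE X) (toE Y) := trace_inner_aux X Y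
  have h2 : (Xᴴ * X).trace.re = ‖toE X‖ ^ 2 := by
    rw [trace_inner_aux X X, ← inner_self_eq_norm_sq (𝕜 := ℂ) (toE X), RCLike.re_to_complex]
  have h3 : (Yᴴ * Y).trace.re = ‖toE Y‖ ^ 2 := by
    rw [trace_inner_aux Y Y, ← inner_self_eq_norm_sq (𝕜 := ℂ) (toE Y), RCLike.re_to_complex]
  rw [h1, h2, h3, Real.sqrt_sq (norm_nonneg _), Real.sqrt_sq (norm_nonneg _)]
  exact norm_inner_le_norm _ _

lemma psd_diag_re_nonneg {R : Matrix d d ℂ} (hR : R.PosSemidef) (i : d) : 0 ≤ (R i i).re := by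
  have h := hR.re_dotProduct_nonneg (Pi.single i 1)
  simpa [dotProduct, Matrix.mulVec_single, Pi.single_apply, Finset.sum_ite_eq,
    RCLike.re_to_complex] using h

lemma psd_trace_re_nonneg {R : Matrix d d ℂ} (hR : R.PosSemidef) : 0 ≤ R.trace.re := by
  rw [Matrix.trace]
  calc (0:ℝ) ≤ (∑ i, (R i i).re) := Finset.sum_nonneg fun i _ => psd_diag_re_nonneg hR i
  _ = (∑ i, R.diag i).re := by rw [Complex.re_sum]; rfl

lemma psd_eq_ct_mul_self {R : Matrix d d ℂ} (hR : R.PosSemidef) :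
    ∃ B : Matrix d d ℂ, R = Bᴴ * B := by
  open scoped MatrixOrder in
  exact (CStarAlgebra.nonneg_iff_eq_star_mul_self.mp hR.nonneg)

lemma trace_cs (E F φ : Matrix d d ℂ) (hφ : φ.PosSemidef) :
    ‖(E * φ * Fᴴ).trace‖ ≤
      Real.sqrt ((E * φ * Eᴴ).trace.re) * Real.sqrt ((F * φ * Fᴴ).trace.re) := by
  obtain ⟨C, hC⟩ := psd_eq_ct_mul_self hφ
  have key : ∀ G H : Matrix d d ℂ, G * φ * Hᴴ = (G * Cᴴ) * (H * Cᴴ)ᴴ := by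
    intro G H
    rw [hC]
    simp only [Matrix.conjTranspose_mul, Matrix.conjTranspose_conjTranspose]
    noncomm_ring
  have h1 : (E * φ * Fᴴ).trace = ((F * Cᴴ)ᴴ * (E * Cᴴ)).trace := by
    rw [key E F, Matrix.trace_mul_comm]
  have h2 : ∀ G : Matrix d d ℂ, (G * φ * Gᴴ).trace = ((G * Cᴴ)ᴴ * (G * Cᴴ)).trace := by
    intro G; rw [key G G, Matrix.trace_mul_comm]
  rw [h1, h2 E, h2 F, mul_comm]
  exact frob_cs _ _

lemma trace_mul_psd_nonneg {R φ : Matrix d d ℂ} (hR : R.PosSemidef) (hφ : φ.PosSemidef) :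
    0 ≤ (R * φ).trace.re := by
  obtain ⟨B, hB⟩ := psd_eq_ct_mul_self hR
  rw [hB, Matrix.mul_assoc, Matrix.trace_mul_comm]
  exact psd_trace_re_nonneg (by simpa [Matrix.mul_assoc] using hφ.mul_mul_conjTranspose_same B)

lemma magic (P M A : Matrix d d ℂ) (hPp : P * P = P) (hMp : M * M = M)
    (hA : A = P*M*P + (1-P)*M*(1-P)) :
    M * ((A + A - 1) * (A + A - 1)) * M = M * A * M + M * A * M - M := by
  subst hA
  have hM2 : ∀ B : Matrix d d ℂ, M * (M * B) = M * B := fun B => by rw [← mul_assoc, hMp]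
  have hP2 : ∀ B : Matrix d d ℂ, P * (P * B) = P * B := fun B => by rw [← mul_assoc, hPp]
  simp only [mul_sub, sub_mul, mul_add, add_mul, mul_one, one_mul, mul_assoc, hM2, hP2, hMp, hPp]
  noncomm_ring [hM2, hP2, hMp, hPp]

lemma diff_bound (X M φ : Matrix d d ℂ) (hφ : φ.PosSemidef) (hφtr : φ.trace = 1)
    (hXh : Xᴴ = X) (hMh : Mᴴ = M) (hMp : M * M = M)
    (hpsd : Matrix.PosSemidef (1 - X * X)) (γ : ℝ)
    (hγ : ((1 - M) * φ).trace.re = γ) :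
    |(X * φ).trace.re - (X * (M * φ * M)).trace.re| ≤ 2 * Real.sqrt γ := by
  set M' : Matrix d d ℂ := 1 - M with hM'
  have hM'h : M'ᴴ = M' := by simp [hM', hMh]
  have hM'p : M' * M' = M' := by rw [hM']; noncomm_ring [hMp]
  have hMpsd : Matrix.PosSemidef (M' * φ * M') := by
    have := hφ.mul_mul_conjTranspose_same M'
    rwa [hM'h] at this
  have hMpsd2 : Matrix.PosSemidef (M * φ * M) := by
    have := hφ.mul_mul_conjTranspose_same M
    rwa [hMh] at this
  have htrM' : (M' * φ * M').trace = (M' * φ).trace := by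
    rw [Matrix.trace_mul_cycle, hM'p]
  have htrM : (M * φ * M).trace = (M * φ).trace := by
    rw [Matrix.trace_mul_cycle, hMp]
  have hsub : ∀ R : Matrix d d ℂ, ((1 - X * X) * R).trace.re = R.trace.re - ((X*X) * R).trace.re := by
    intro R
    rw [sub_mul, one_mul, Matrix.trace_sub, Complex.sub_re]
  have key1 : ((X*X) * (M' * φ * M')).trace.re ≤ γ := by
    have h0 := trace_mul_psd_nonneg hpsd hMpsd
    rw [hsub] at h0
    have : (M' * φ * M').trace.re = γ := by rw [htrM', hγ]
    linarith
  have key2 : ((X*X) * (M * φ * M)).trace.re ≤ 1 := by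
    have h0 := trace_mul_psd_nonneg hpsd hMpsd2
    rw [hsub] at h0
    have h1 : (M * φ * M).trace.re ≤ 1 := by
      have h2 : 0 ≤ (M' * φ).trace.re := by rw [← htrM']; exact psd_trace_re_nonneg hMpsd
      have h3 : (M * φ).trace + (M' * φ).trace = 1 := by
        rw [← Matrix.trace_add, ← Matrix.add_mul, hM']
        simp [hφtr]
      have h4 : (M * φ).trace.re + (M' * φ).trace.re = 1 := by
        have := congrArg Complex.re h3; simpa [Complex.add_re] using this
      rw [htrM]; linarith
    linarith
  have cyc : ∀ R : Matrix d d ℂ, (X * R * X).trace = ((X*X) * R).trace := by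
    intro R
    rw [Matrix.trace_mul_cycle]
  have b1 : ‖((X*M') * φ * (1 : Matrix d d ℂ)ᴴ).trace‖ ≤ Real.sqrt γ := by
    have h := trace_cs (X*M') 1 φ hφ
    have e1 : (X*M') * φ * (X*M')ᴴ = X * (M' * φ * M') * X := by
      rw [Matrix.conjTranspose_mul, hXh, hM'h]; noncomm_ring
    have e2 : (1 : Matrix d d ℂ) * φ * (1 : Matrix d d ℂ)ᴴ = φ := by simp
    rw [e1, e2, hφtr, cyc] at h
    simpa using h.trans (by
      have := Real.sqrt_le_sqrt key1
      simpa [Complex.one_re, Real.sqrt_one] using this)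
  have b2 : ‖((X*M) * φ * M'ᴴ).trace‖ ≤ Real.sqrt γ := by
    have h := trace_cs (X*M) M' φ hφ
    have e1 : (X*M) * φ * (X*M)ᴴ = X * (M * φ * M) * X := by
      rw [Matrix.conjTranspose_mul, hXh, hMh]; noncomm_ring
    rw [e1, cyc] at h
    have f1 : Real.sqrt (((X*X) * (M * φ * M)).trace.re) ≤ 1 := by
      rw [show (1:ℝ) = Real.sqrt 1 by simp]
      exact Real.sqrt_le_sqrt key2
    have f2 : Real.sqrt ((M' * φ * M'ᴴ).trace.re) = Real.sqrt γ := by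
      rw [hM'h, htrM', hγ]
    rw [f2] at h
    calc ‖((X*M) * φ * M'ᴴ).trace‖ ≤ _ := h
    _ ≤ 1 * Real.sqrt γ := by
        apply mul_le_mul_of_nonneg_right f1 (Real.sqrt_nonneg _)
    _ = Real.sqrt γ := one_mul _
  have hsplit : X * φ - X * (M * φ * M) = (X*M') * φ * (1 : Matrix d d ℂ)ᴴ + (X*M) * φ * M'ᴴ := by
    rw [hM'h, Matrix.conjTranspose_one, hM']
    noncomm_ring
  have htr : (X * φ).trace - (X * (M * φ * M)).trace
      = ((X*M') * φ * (1 : Matrix d d ℂ)ᴴ).trace + ((X*M) * φ * M'ᴴ).trace := by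
    rw [← Matrix.trace_add, ← Matrix.trace_sub, hsplit]
  have : |((X * φ).trace - (X * (M * φ * M)).trace).re| ≤ 2 * Real.sqrt γ := by
    calc |((X * φ).trace - (X * (M * φ * M)).trace).re|
        ≤ ‖(X * φ).trace - (X * (M * φ * M)).trace‖ := Complex.abs_re_le_norm _
    _ = ‖((X*M') * φ * (1 : Matrix d d ℂ)ᴴ).trace + ((X*M) * φ * M'ᴴ).trace‖ := by rw [htr]
    _ ≤ ‖((X*M') * φ * (1 : Matrix d d ℂ)ᴴ).trace‖ + ‖((X*M) * φ * M'ᴴ).trace‖ := norm_add_le _ _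
    _ ≤ Real.sqrt γ + Real.sqrt γ := add_le_add b1 b2
    _ = 2 * Real.sqrt γ := by ring
  simpa [Complex.sub_re] using this

end Aux

set_option maxHeartbeats 1000000 in
/-- let `Π`, `M` be orthogonal projections and `φ` a density
operator on a finite-dimensional Hilbert space. With
`γ = 1 - Tr(Mφ)`, `μ = |1/2 - Tr(MΠφΠ) - Tr(M(I-Π)φ(I-Π))|`, and `K` the
spectral projection of `A = ΠMΠ + (I-Π)M(I-Π)` onto eigenvalues in
`[1-ω, ω]` for `1/2 < ω ≤ 1`, one has
`Tr((I-K)φ) ≤ (2μ + 10√γ)/(1 - 4ω(1-ω))`. -/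
theorem jordan_angle_bound {d : Type*} [Fintype d] [DecidableEq d]
    (P M φ : Matrix d d ℂ)
    (hP : P.IsHermitian) (hPproj : P * P = P)
    (hM : M.IsHermitian) (hMproj : M * M = M)
    (hφ : φ.PosSemidef) (hφtr : φ.trace = 1)
    (ω : ℝ) (hω : 1 / 2 < ω) (hω1 : ω ≤ 1)
    (γ μ : ℝ)
    (hγ : γ = 1 - (M * φ).trace.re)
    (hμ : μ = |1 / 2 - (M * (P * φ * P)).trace.re -
      (M * ((1 - P) * φ * (1 - P))).trace.re|)
    (A : Matrix d d ℂ)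
    (hA : A = P * M * P + (1 - P) * M * (1 - P))
    (hAh : A.IsHermitian)
    (K : Matrix d d ℂ)
    (hK : K = (hAh.eigenvectorUnitary : Matrix d d ℂ) *
      Matrix.diagonal (fun i => if hAh.eigenvalues i ∈ Set.Icc (1 - ω) ω
        then (1 : ℂ) else 0) *
      (hAh.eigenvectorUnitary : Matrix d d ℂ)ᴴ) :
    ((1 - K) * φ).trace.re ≤ (2 * μ + 10 * Real.sqrt γ) / (1 - 4 * ω * (1 - ω)) := by
  set U : Matrix d d ℂ := (hAh.eigenvectorUnitary : Matrix d d ℂ) with hUdef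
  set e : d → ℝ := hAh.eigenvalues with he
  set ψ : Matrix d d ℂ := M * φ * M with hψdef
  -- unitary facts
  have hU1 : U * Uᴴ = 1 := by
    have := (hAh.eigenvectorUnitary).2
    rw [Matrix.mem_unitaryGroup_iff] at this
    simpa [Matrix.star_eq_conjTranspose] using this
  have hU2 : Uᴴ * U = 1 := by
    have := (hAh.eigenvectorUnitary).2
    rw [Matrix.mem_unitaryGroup_iff'] at this
    simpa [Matrix.star_eq_conjTranspose] using this
  have hAspec : A = U * Matrix.diagonal (fun i => (e i : ℂ)) * Uᴴ := by
    have := hAh.spectral_theorem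
    simpa [Matrix.star_eq_conjTranspose, Function.comp_def] using this
  have hconj_mul : ∀ c c' : d → ℂ,
      (U * Matrix.diagonal c * Uᴴ) * (U * Matrix.diagonal c' * Uᴴ)
        = U * Matrix.diagonal (fun i => c i * c' i) * Uᴴ := by
    intro c c'
    calc (U * Matrix.diagonal c * Uᴴ) * (U * Matrix.diagonal c' * Uᴴ)
        = U * Matrix.diagonal c * (Uᴴ * U) * Matrix.diagonal c' * Uᴴ := by
          simp only [Matrix.mul_assoc]
    _ = U * (Matrix.diagonal c * Matrix.diagonal c') * Uᴴ := by
          rw [hU2]; simp only [Matrix.mul_assoc, Matrix.mul_one, Matrix.one_mul]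
    _ = _ := by rw [Matrix.diagonal_mul_diagonal]
  have htrace : ∀ (c : d → ℂ) (B : Matrix d d ℂ),
      ((U * Matrix.diagonal c * Uᴴ) * B).trace = ∑ i, c i * ((Uᴴ * B * U) i i) := by
    intro c B
    have h1 : ((U * Matrix.diagonal c * Uᴴ) * B).trace
        = (Matrix.diagonal c * (Uᴴ * B * U)).trace := by
      simp only [Matrix.mul_assoc]
      rw [Matrix.trace_mul_comm]
      simp only [Matrix.mul_assoc]
    rw [h1]
    simp [Matrix.trace, Matrix.diag, Matrix.diagonal_mul]
  -- K spectral facts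
  set k : d → ℝ := fun i => if e i ∈ Set.Icc (1-ω) ω then 1 else 0 with hkdef
  have hcoef : (fun i => if e i ∈ Set.Icc (1-ω) ω then (1:ℂ) else 0)
      = (fun i => ((k i : ℝ) : ℂ)) := by
    funext i; simp only [hkdef]; split_ifs <;> simp
  have hKspec : K = U * Matrix.diagonal (fun i => ((k i : ℝ) : ℂ)) * Uᴴ := by
    rw [hK, hcoef]
  have hOneKspec : 1 - K = U * Matrix.diagonal (fun i => ((1 - k i : ℝ) : ℂ)) * Uᴴ := by
    have h3 : Matrix.diagonal (fun i => ((1 - k i : ℝ):ℂ))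
        = 1 - Matrix.diagonal (fun i => ((k i : ℝ):ℂ)) := by
      ext i j
      by_cases h : i = j <;> simp [Matrix.diagonal_apply, Matrix.one_apply, h] <;> push_cast <;> ring
    rw [h3, Matrix.mul_sub, Matrix.sub_mul, Matrix.mul_one, hU1, ← hKspec]
  have hKh : Kᴴ = K := by
    rw [hKspec]
    have hDh : (Matrix.diagonal fun i => ((k i:ℝ):ℂ))ᴴ = Matrix.diagonal fun i => ((k i:ℝ):ℂ) := by
      ext i j
      by_cases h : i = j
      · subst h; simp [Complex.conj_ofReal]
      · simp [Matrix.conjTranspose_apply, Matrix.diagonal_apply_ne, h, Ne.symm h]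
    simp only [Matrix.conjTranspose_mul, Matrix.conjTranspose_conjTranspose, hDh,
      Matrix.mul_assoc]
  have hKidem : K * K = K := by
    rw [hKspec, hconj_mul]
    have : (fun i => ((k i : ℝ):ℂ) * ((k i : ℝ):ℂ)) = (fun i => ((k i : ℝ):ℂ)) := by
      funext i; simp only [hkdef]; split_ifs <;> simp
    rw [this]
  have hKpsd : K.PosSemidef := by
    rw [hKspec]
    have hD : Matrix.PosSemidef (Matrix.diagonal (fun i => ((k i : ℝ) : ℂ))) := by
      rw [Matrix.posSemidef_diagonal_iff]
      intro i
      simp only [hkdef]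
      split_ifs <;> simp
    exact hD.mul_mul_conjTranspose_same U

  -- idempotent helper rules
  have hM2 : ∀ B : Matrix d d ℂ, M * (M * B) = M * B := fun B => by rw [← Matrix.mul_assoc, hMproj]
  have hP2 : ∀ B : Matrix d d ℂ, P * (P * B) = P * B := fun B => by rw [← Matrix.mul_assoc, hPproj]
  -- 1 - A*A is PSD
  have i1 : (1 : Matrix d d ℂ) - A
      = ((1-M)*P)ᴴ*((1-M)*P) + ((1-M)*(1-P))ᴴ*((1-M)*(1-P)) := by
    rw [hA]
    simp only [Matrix.conjTranspose_mul, Matrix.conjTranspose_sub, Matrix.conjTranspose_one,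
      hP.eq, hM.eq]
    simp only [mul_sub, sub_mul, mul_add, add_mul, mul_one, one_mul, mul_assoc, hM2, hP2,
      hMproj, hPproj]
    noncomm_ring
  have i2 : A - A*A
      = ((1-P)*M*P)ᴴ*((1-P)*M*P) + (P*M*(1-P))ᴴ*(P*M*(1-P)) := by
    rw [hA]
    simp only [Matrix.conjTranspose_mul, Matrix.conjTranspose_sub, Matrix.conjTranspose_one,
      hP.eq, hM.eq]
    simp only [mul_sub, sub_mul, mul_add, add_mul, mul_one, one_mul, mul_assoc, hM2, hP2,
      hMproj, hPproj]
    noncomm_ring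
  have hA2psd : Matrix.PosSemidef (1 - A*A) := by
    have h0 : (1 : Matrix d d ℂ) - A*A = ((1 : Matrix d d ℂ) - A) + (A - A*A) := by noncomm_ring
    rw [h0, i1, i2]
    exact ((Matrix.posSemidef_conjTranspose_mul_self _).add
      (Matrix.posSemidef_conjTranspose_mul_self _)).add
      ((Matrix.posSemidef_conjTranspose_mul_self _).add
        (Matrix.posSemidef_conjTranspose_mul_self _))
  have hKpsd2 : Matrix.PosSemidef (1 - (1-K)*(1-K)) := by
    have h0 : (1 : Matrix d d ℂ) - (1-K)*(1-K) = K + (K - K * K) := by noncomm_ring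
    rw [h0, hKidem, sub_self, add_zero]
    exact hKpsd
  have hX1h : (1-K)ᴴ = 1-K := by
    rw [Matrix.conjTranspose_sub, Matrix.conjTranspose_one, hKh]
  -- gamma facts
  have hgam : ((1 - M) * φ).trace.re = γ := by
    rw [Matrix.sub_mul, Matrix.one_mul, Matrix.trace_sub, Complex.sub_re, hφtr, hγ]
    norm_num
  have hMfM : Matrix.PosSemidef (M * φ * M) := by
    have := hφ.mul_mul_conjTranspose_same M
    rwa [hM.eq] at this
  have hM'fM' : Matrix.PosSemidef ((1-M) * φ * (1-M)) := by
    have := hφ.mul_mul_conjTranspose_same (1-M)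
    rwa [Matrix.conjTranspose_sub, Matrix.conjTranspose_one, hM.eq] at this
  have hM'idem : (1-M) * (1-M) = (1 : Matrix d d ℂ) - M := by noncomm_ring [hMproj]
  have hγ0 : 0 ≤ γ := by
    rw [← hgam]
    have h1 : ((1-M) * φ * (1-M)).trace = ((1-M) * φ).trace := by
      rw [Matrix.trace_mul_cycle, hM'idem]
    rw [← h1]
    exact psd_trace_re_nonneg hM'fM'
  have hγ1 : γ ≤ 1 := by
    have h1 : (M * φ * M).trace = (M * φ).trace := by
      rw [Matrix.trace_mul_cycle, hMproj]
    have h2 : 0 ≤ (M * φ).trace.re := by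
      rw [← h1]; exact psd_trace_re_nonneg hMfM
    rw [hγ]; linarith
  have hγsq : γ ≤ Real.sqrt γ := by
    nlinarith [Real.sq_sqrt hγ0, Real.sqrt_nonneg γ, hγ1, hγ0]
  -- difference bounds
  have d1 := diff_bound (1-K) M φ hφ hφtr hX1h hM.eq hMproj hKpsd2 γ hgam
  have d2 := diff_bound A M φ hφ hφtr hAh.eq hM.eq hMproj hA2psd γ hgam
  -- trace of (2A-1)^2 against ψ via the algebraic identity
  have swap : ∀ R : Matrix d d ℂ, (R * ψ).trace = ((M * R * M) * φ).trace := by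
    intro R
    rw [hψdef, show R * (M * φ * M) = (R * M * φ) * M by noncomm_ring,
      ← Matrix.trace_mul_comm, show M * (R * M * φ) = (M * R * M) * φ by noncomm_ring]
  have hQtr : (((A + A - 1) * (A + A - 1)) * ψ).trace
      = (A * ψ).trace + (A * ψ).trace - (M * φ).trace := by
    rw [swap, magic P M A hPproj hMproj hA]
    rw [Matrix.sub_mul, Matrix.add_mul, Matrix.trace_sub, Matrix.trace_add, ← swap A]
  -- spectral form of (2A-1)^2
  have hstep1 : A + A - 1 = U * Matrix.diagonal (fun i => ((2*e i - 1 : ℝ):ℂ)) * Uᴴ := by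
    have hd : Matrix.diagonal (fun i => ((2*e i - 1 : ℝ):ℂ))
        = Matrix.diagonal (fun i => ((e i : ℝ):ℂ)) + Matrix.diagonal (fun i => ((e i : ℝ):ℂ))
          - 1 := by
      ext i j
      by_cases h : i = j
      · subst h; simp [Matrix.diagonal_apply_eq, Matrix.one_apply_eq]; push_cast; ring
      · simp [Matrix.diagonal_apply_ne, h, Matrix.one_apply_ne]
    rw [hd, Matrix.mul_sub, Matrix.sub_mul, Matrix.mul_add, Matrix.add_mul, Matrix.mul_one,
      hU1, ← hAspec]
  have hQspec : (A + A - 1) * (A + A - 1)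
      = U * Matrix.diagonal (fun i => (((2*e i - 1)^2 : ℝ):ℂ)) * Uᴴ := by
    rw [hstep1, hconj_mul]
    have : (fun i => ((2*e i - 1 : ℝ):ℂ) * ((2*e i - 1 : ℝ):ℂ))
        = (fun i => (((2*e i - 1)^2 : ℝ):ℂ)) := by
      funext i; push_cast; ring
    rw [this]
  have hσpsd : Matrix.PosSemidef (Uᴴ * ψ * U) := hMfM.conjTranspose_mul_mul_same U
  have hr : (((A + A - 1) * (A + A - 1)) * ψ).trace.re
      = ∑ i, (2*e i - 1)^2 * ((Uᴴ * ψ * U) i i).re := by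
    rw [hQspec, htrace, Complex.re_sum]
    exact Finset.sum_congr rfl fun i _ => Complex.re_ofReal_mul _ _
  have hs : ((1 - K) * ψ).trace.re = ∑ i, (1 - k i) * ((Uᴴ * ψ * U) i i).re := by
    rw [hOneKspec, htrace, Complex.re_sum]
    exact Finset.sum_congr rfl fun i _ => Complex.re_ofReal_mul _ _
  -- pointwise spectral inequality
  have hpt : ∀ i, (2*ω-1)^2 * ((1 - k i) * ((Uᴴ*ψ*U) i i).re)
      ≤ (2*e i - 1)^2 * ((Uᴴ*ψ*U) i i).re := by
    intro i
    have hd := psd_diag_re_nonneg hσpsd i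
    by_cases h : e i ∈ Set.Icc (1-ω) ω
    · simp only [hkdef, if_pos h, sub_self, zero_mul, mul_zero]
      positivity
    · simp only [hkdef, if_neg h, sub_zero, one_mul]
      apply mul_le_mul_of_nonneg_right _ hd
      rw [Set.mem_Icc, not_and_or, not_le, not_le] at h
      rcases h with h | h
      · nlinarith
      · nlinarith
  have hws : (2*ω-1)^2 * ((1 - K) * ψ).trace.re
      ≤ (((A + A - 1) * (A + A - 1)) * ψ).trace.re := by
    rw [hr, hs, Finset.mul_sum]
    exact Finset.sum_le_sum fun i _ => hpt i
  -- real parts of the trace identity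
  have h5 := congrArg Complex.re hQtr
  simp only [Complex.add_re, Complex.sub_re] at h5
  have hMre : (M * φ).trace.re = 1 - γ := by rw [hγ]; ring
  rw [hMre] at h5
  -- bound on Tr(Aφ) via μ
  have hsplitA : (A * φ).trace
      = (M * (P * φ * P)).trace + (M * ((1 - P) * φ * (1 - P))).trace := by
    rw [hA, Matrix.add_mul, Matrix.trace_add]
    congr 1
    · rw [show P * M * P * φ = P * (M * P * φ) from by noncomm_ring, Matrix.trace_mul_comm,
        show (M * P * φ) * P = M * (P * φ * P) from by noncomm_ring]
    · rw [show (1-P) * M * (1-P) * φ = (1-P) * (M * (1-P) * φ) from by noncomm_ring,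
        Matrix.trace_mul_comm,
        show (M * (1-P) * φ) * (1-P) = M * ((1-P) * φ * (1-P)) from by noncomm_ring]
  have h6 := congrArg Complex.re hsplitA
  simp only [Complex.add_re] at h6
  have ha : (A * φ).trace.re - 1/2 ≤ μ := by
    rw [hμ]
    have habs := neg_le_abs (1 / 2 - (M * (P * φ * P)).trace.re -
      (M * ((1 - P) * φ * (1 - P))).trace.re)
    linarith
  have hμ0 : 0 ≤ μ := by rw [hμ]; exact abs_nonneg _
  -- final arithmetic
  have hwpos : (0:ℝ) < (2*ω-1)^2 := pow_pos (by linarith) 2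
  have hwle1 : (2*ω-1)^2 ≤ 1 := pow_le_one₀ (by linarith) (by linarith)
  have hWeq : 1 - 4*ω*(1-ω) = (2*ω-1)^2 := by ring
  rw [hWeq, le_div_iff₀ hwpos]
  rw [← hψdef] at d1 d2
  have e1 := (abs_le.mp d1).2
  have e2 := (abs_le.mp d2).1
  have hg0 := Real.sqrt_nonneg γ
  nlinarith [mul_le_mul_of_nonneg_right e1 (le_of_lt hwpos), hws, h5, e2, ha, hγsq, hμ0,
    hwle1, hg0, hwpos]
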